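/- For a decreasing tableau P of partition shape, the right key K_+(P), whose j-th column is ∅ ⋆ word(P_{≥j}) (where P_{≥j} drops the first j−1 columns and word is the bottom-to-top, left-to-right column reading word), is itself a key: each column contains the next column as a set. -/

import Mathlib

/-- The `⋆` column-bumping action of a single letter `m` on a finite set `S`:
if no element of `S` is `≥ m`, then `S ⋆ m = S ∪ {m}`; otherwise
`S ⋆ m = (S \ {m'}) ∪ {m}` where `m'` is the smallest element of `S` with `m' ≥ m`. -/
def starLetter (S : Finset ℕ) (m : ℕ) : Finset ℕ :=
  if h : (S.filter (fun s => m ≤ s)).Nonempty then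
    insert m (S.erase ((S.filter (fun s => m ≤ s)).min' h))
  else insert m S

/-- The `⋆` action of a word, letter by letter from the left. -/
def star (S : Finset ℕ) (w : List ℕ) : Finset ℕ :=
  w.foldl starLetter S

/-- A decreasing tableau, represented by its list of columns (each column listed
top to bottom): entries strictly decrease down each column, column lengths weakly
decrease left to right, and entries strictly decrease along rows left to right. -/
def IsDecTab (T : List (List ℕ)) : Prop :=
  (∀ col ∈ T, List.Chain' (· > ·) col) ∧
  List.Chain' (fun C D : List ℕ => D.length ≤ C.length ∧
    ∀ r : ℕ, r < D.length → D.getD r 0 < C.getD r 0) T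

/-- The column reading word: each column read bottom to top, columns left to right. -/
def colWord (T : List (List ℕ)) : List ℕ :=
  (T.map List.reverse).flatten

/-- The `j`-th column (0-indexed) of the right key `K₊(T)`:
`∅ ⋆ word(T_{≥ j})`, where `T_{≥ j}` drops the first `j` columns of `T`. -/
def Kcol (T : List (List ℕ)) (j : ℕ) : Finset ℕ :=
  star ∅ (colWord (T.drop j))

lemma star_nil (S : Finset ℕ) : star S [] = S := rfl
lemma star_cons (S : Finset ℕ) (m : ℕ) (w : List ℕ) :
    star S (m :: w) = star (starLetter S m) w := rfl
lemma star_append (S : Finset ℕ) (a b : List ℕ) :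
    star S (a ++ b) = star (star S a) b := List.foldl_append ..

lemma starLetter_mono {S S' : Finset ℕ} (h : S ⊆ S') (m : ℕ) :
    starLetter S m ⊆ starLetter S' m := by
  have hf : S.filter (fun s => m ≤ s) ⊆ S'.filter (fun s => m ≤ s) :=
    Finset.filter_subset_filter _ h
  unfold starLetter
  split_ifs with h1 h2 h2
  · -- both bump
    intro x hx
    rcases Finset.mem_insert.mp hx with rfl | hx
    · exact Finset.mem_insert_self _ _
    · obtain ⟨hxne, hxS⟩ := Finset.mem_erase.mp hx
      refine Finset.mem_insert_of_mem (Finset.mem_erase.mpr ⟨?_, h hxS⟩)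
      intro hxeq
      -- x = min' of S' filter
      have hm2 := Finset.min'_mem _ h2
      rw [← hxeq] at hm2
      have hxf : x ∈ S.filter (fun s => m ≤ s) :=
        Finset.mem_filter.mpr ⟨hxS, (Finset.mem_filter.mp hm2).2⟩
      have h1le := Finset.min'_le _ _ hxf
      have h2le : (S'.filter (fun s => m ≤ s)).min' h2 ≤
          (S.filter (fun s => m ≤ s)).min' h1 :=
        Finset.min'_le _ _ (hf (Finset.min'_mem _ h1))
      rw [← hxeq] at h2le
      exact hxne (le_antisymm h2le h1le)
  · exact absurd (h1.mono hf) h2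
  · intro x hx
    rcases Finset.mem_insert.mp hx with rfl | hx
    · exact Finset.mem_insert_self _ _
    · refine Finset.mem_insert_of_mem (Finset.mem_erase.mpr ⟨?_, h hx⟩)
      intro hxeq
      have hm2 := Finset.min'_mem _ h2
      rw [← hxeq] at hm2
      exact h1 ⟨x, Finset.mem_filter.mpr ⟨hx, (Finset.mem_filter.mp hm2).2⟩⟩
  · exact Finset.insert_subset_insert _ h

lemma star_mono : ∀ (w : List ℕ) {S S' : Finset ℕ}, S ⊆ S' → star S w ⊆ star S' w
  | [], _, _, h => h
  | m :: w, S, S', h => by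
      rw [star_cons, star_cons]
      exact star_mono w (starLetter_mono h m)

lemma mem_starLetter_self (S : Finset ℕ) (m : ℕ) : m ∈ starLetter S m := by
  unfold starLetter; split_ifs <;> exact Finset.mem_insert_self _ _

lemma mem_starLetter_of_lt {S : Finset ℕ} {m x : ℕ} (h : m ∈ S) (hx : m < x) :
    m ∈ starLetter S x := by
  unfold starLetter
  split_ifs with h1
  · refine Finset.mem_insert_of_mem (Finset.mem_erase.mpr ⟨?_, h⟩)
    intro hxeq
    have := (Finset.mem_filter.mp (Finset.min'_mem _ h1)).2
    rw [← hxeq] at this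
    omega
  · exact Finset.mem_insert_of_mem h

lemma mem_star_of_lt : ∀ (w : List ℕ) {S : Finset ℕ} {m : ℕ},
    m ∈ S → (∀ x ∈ w, m < x) → m ∈ star S w
  | [], _, _, h, _ => h
  | x :: w, S, m, h, hw => by
      rw [star_cons]
      exact mem_star_of_lt w (mem_starLetter_of_lt h (hw x (by simp)))
        (fun y hy => hw y (by simp [hy]))

lemma mem_star_of_chain {w : List ℕ} (hw : List.Chain' (· < ·) w) :
    ∀ (S : Finset ℕ), ∀ x ∈ w, x ∈ star S w := by
  induction w with
  | nil => simp
  | cons m w ih =>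
    intro S x hx
    have hpw := List.pairwise_cons.mp (List.isChain_iff_pairwise.mp hw)
    rcases hx with _ | hx
    · rw [star_cons]
      exact mem_star_of_lt w (mem_starLetter_self S m) hpw.1
    · rw [star_cons]
      exact ih (List.isChain_iff_pairwise.mpr hpw.2) _ x (by assumption)

lemma starLetter_bump {S : Finset ℕ} {m : ℕ} (h : (S.filter (fun s => m ≤ s)).Nonempty) :
    starLetter S m = insert m (S.erase ((S.filter (fun s => m ≤ s)).min' h)) := by
  rw [starLetter, dif_pos h]

/-- If every letter bumps (with enough slack) the cardinality is preserved. -/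
lemma bump_card : ∀ (w : List ℕ) (S : Finset ℕ), List.Chain' (· < ·) w →
    (∀ i, (hi : i < w.length) → w.length - i ≤ (S.filter (fun s => w[i] ≤ s)).card) →
    (star S w).card = S.card := by
  intro w
  induction w with
  | nil => intro S _ _; rfl
  | cons m w ih =>
    intro S hch hdom
    have hpw := List.pairwise_cons.mp (List.isChain_iff_pairwise.mp hch)
    have h0 := hdom 0 (by simp)
    simp only [List.getElem_cons_zero, List.length_cons, Nat.sub_zero] at h0
    have hne : (S.filter (fun s => m ≤ s)).Nonempty := by
      rw [← Finset.card_pos]; omega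
    set m' := (S.filter (fun s => m ≤ s)).min' hne with hm'
    have hm'f : m' ∈ S.filter (fun s => m ≤ s) := Finset.min'_mem _ _
    have hm'S : m' ∈ S := (Finset.mem_filter.mp hm'f).1
    have hm'ge : m ≤ m' := (Finset.mem_filter.mp hm'f).2
    have hstep : starLetter S m = insert m (S.erase m') := starLetter_bump hne
    have hmnotin : m ∉ S.erase m' := by
      intro hmem
      obtain ⟨hne', hmS⟩ := Finset.mem_erase.mp hmem
      have : m' ≤ m := Finset.min'_le _ _ (Finset.mem_filter.mpr ⟨hmS, le_refl m⟩)
      omega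
    have hcard : (starLetter S m).card = S.card := by
      rw [hstep, Finset.card_insert_of_notMem hmnotin, Finset.card_erase_of_mem hm'S]
      have : 0 < S.card := Finset.card_pos.mpr ⟨m', hm'S⟩
      omega
    rw [star_cons, ih (starLetter S m) (hch.tail) ?_, hcard]
    -- the new domination hypothesis
    intro i hi
    set x := w[i] with hx
    have hmx : m < x := hpw.1 x (List.getElem_mem hi)
    have hxfilter : (starLetter S m).filter (fun s => x ≤ s)
        = (S.filter (fun s => x ≤ s)).erase m' := by
      rw [hstep, Finset.filter_insert, if_neg (by omega), Finset.filter_erase]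
    have hprev := hdom (i + 1) (by simpa using Nat.succ_lt_succ hi)
    simp only [List.getElem_cons_succ, List.length_cons] at hprev
    have hprev' : w.length + 1 - (i + 1) ≤ (S.filter (fun s => x ≤ s)).card := hprev
    clear hprev
    rw [hxfilter]
    by_cases hcase : x ≤ m'
    · -- the bumped element is ≥ x : all elements ≥ m are ≥ x
      have hsub : S.filter (fun s => m ≤ s) ⊆ S.filter (fun s => x ≤ s) := by
        intro s hs
        obtain ⟨hsS, hms⟩ := Finset.mem_filter.mp hs
        exact Finset.mem_filter.mpr ⟨hsS, le_trans hcase (Finset.min'_le _ _ hs)⟩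
      have h1 := Finset.card_le_card hsub
      have h2 : (S.filter (fun s => x ≤ s)).card - 1
          ≤ ((S.filter (fun s => x ≤ s)).erase m').card :=
        Finset.pred_card_le_card_erase
      omega
    · -- the bumped element is < x : erasing it does not affect the filter
      have : m' ∉ S.filter (fun s => x ≤ s) := by
        intro hmem
        exact hcase ((Finset.mem_filter.mp hmem).2)
      rw [Finset.erase_eq_of_notMem this]
      omega

/-- Inserting an increasing word all of whose letters exceed `S` adds them all. -/
lemma star_card_inc : ∀ (w : List ℕ) (S : Finset ℕ), List.Chain' (· < ·) w →
    (∀ x ∈ w, ∀ s ∈ S, s < x) → (star S w).card = S.card + w.length := by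
  intro w
  induction w with
  | nil => intro S _ _; simp [show star S [] = S from rfl]
  | cons m w ih =>
    intro S hch hbig
    have hpw := List.pairwise_cons.mp (List.isChain_iff_pairwise.mp hch)
    have hemp : ¬ (S.filter (fun s => m ≤ s)).Nonempty := by
      rintro ⟨s, hs⟩
      obtain ⟨hsS, hms⟩ := Finset.mem_filter.mp hs
      exact absurd hms (by have := hbig m (by simp) s hsS; omega)
    have hstep : starLetter S m = insert m S := by rw [starLetter, dif_neg hemp]
    have hmnot : m ∉ S := fun h => lt_irrefl m (hbig m (by simp) m h)
    rw [star_cons, hstep, ih (insert m S) hch.tail ?_]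
    · rw [Finset.card_insert_of_notMem hmnot]; simp; ring
    · intro x hx s hs
      rcases Finset.mem_insert.mp hs with rfl | hs
      · exact hpw.1 x hx
      · exact hbig x (List.mem_cons_of_mem _ hx) s hs

lemma chain_rev {C : List ℕ} (h : List.Chain' (· > ·) C) :
    List.Chain' (· < ·) C.reverse := by
  refine List.isChain_reverse.mpr ?_
  exact h

/-- Needed "domination" hypothesis derived from a contained strictly decreasing column. -/
lemma dom_of_subset {C : List ℕ} (hC : List.Chain' (· > ·) C) {S : Finset ℕ}
    (h : ∀ x ∈ C, x ∈ S) :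
    ∀ r, r < C.length → r + 1 ≤ (S.filter (fun s => C.getD r 0 ≤ s)).card := by
  intro r hr
  have hpw := (List.isChain_iff_pairwise.mp hC)
  rw [List.pairwise_iff_getElem] at hpw
  have : (Finset.range (r + 1)).card ≤ (S.filter (fun s => C.getD r 0 ≤ s)).card := by
    apply Finset.card_le_card_of_injOn (fun k => C.getD k 0)
    · intro k hk
      have hk' : k < C.length := by
        have := Finset.mem_range.mp hk; omega
      show C.getD k 0 ∈ S.filter (fun s => C.getD r 0 ≤ s)
      rw [List.getD_eq_getElem _ _ hk', List.getD_eq_getElem _ _ hr]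
      refine Finset.mem_filter.mpr ⟨h _ (List.getElem_mem hk'), ?_⟩
      rcases Nat.lt_or_ge k r with hkr | hkr
      · exact le_of_lt (hpw k r hk' hr hkr)
      · have : k = r := by have := Finset.mem_range.mp hk; omega
        subst this; exact le_refl _
    · intro k1 hk1 k2 hk2 heq
      simp only [Finset.coe_range, Set.mem_Iio] at hk1 hk2
      have hk1' : k1 < C.length := by omega
      have hk2' : k2 < C.length := by omega
      simp only [] at heq
      rw [List.getD_eq_getElem _ _ hk1', List.getD_eq_getElem _ _ hk2'] at heq
      by_contra hne
      rcases Nat.lt_or_ge k1 k2 with hlt | hge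
      · have := hpw k1 k2 hk1' hk2' hlt; omega
      · have : k2 < k1 := by omega
        have := hpw k2 k1 hk2' hk1' this; omega
  simpa using this

/-- Main induction: starting from a set dominating the head column,
every letter of the remaining column word bumps. -/
lemma main_card : ∀ (L : List (List ℕ)) (C : List ℕ) (S : Finset ℕ),
    (∀ D ∈ L, List.Chain' (· > ·) D) →
    List.Chain' (fun C D : List ℕ => D.length ≤ C.length ∧
      ∀ r : ℕ, r < D.length → D.getD r 0 < C.getD r 0) (C :: L) →
    (∀ r, r < C.length → r + 1 ≤ (S.filter (fun s => C.getD r 0 ≤ s)).card) →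
    (star S (colWord L)).card = S.card := by
  intro L
  induction L with
  | nil => intro C S _ _ _; simp [colWord, show star S [] = S from rfl]
  | cons D L' ih =>
    intro C S hdec hch hdom
    obtain ⟨hgood, hch'⟩ := List.isChain_cons_cons.mp hch
    have hDdec : List.Chain' (· > ·) D := hdec D List.mem_cons_self
    have hwch : List.Chain' (· < ·) D.reverse := chain_rev hDdec
    have hcw : colWord (D :: L') = D.reverse ++ colWord L' := by
      simp [colWord]
    have hdomw : ∀ i, (hi : i < D.reverse.length) →
        D.reverse.length - i ≤ (S.filter (fun s => D.reverse[i] ≤ s)).card := by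
      intro i hi
      rw [List.length_reverse] at hi
      have hr : D.length - 1 - i < D.length := by omega
      have hget : D.reverse[i] = D[D.length - 1 - i] := by
        rw [List.getElem_reverse]
      have hrC : D.length - 1 - i < C.length := lt_of_lt_of_le hr hgood.1
      have hlt : D.getD (D.length - 1 - i) 0 < C.getD (D.length - 1 - i) 0 :=
        hgood.2 _ hr
      have hdomr := hdom (D.length - 1 - i) hrC
      have hsub : S.filter (fun s => C.getD (D.length - 1 - i) 0 ≤ s)
          ⊆ S.filter (fun s => D.reverse[i] ≤ s) := by
        intro s hs
        obtain ⟨hsS, hle⟩ := Finset.mem_filter.mp hs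
        refine Finset.mem_filter.mpr ⟨hsS, ?_⟩
        rw [hget, ← List.getD_eq_getElem _ 0 hr]
        omega
      have := Finset.card_le_card hsub
      have hlen : D.reverse.length = D.length := List.length_reverse
      omega
    have hS' : (star S D.reverse).card = S.card := bump_card _ _ hwch hdomw
    have hsub' : ∀ x ∈ D, x ∈ star S D.reverse := by
      intro x hx
      exact mem_star_of_chain hwch S x (List.mem_reverse.mpr hx)
    rw [hcw, star_append]
    rw [ih D (star S D.reverse) (fun E hE => hdec E (List.mem_cons_of_mem _ hE)) hch'
      (dom_of_subset hDdec hsub'), hS']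

/-- **The right key is a key.**  For a decreasing tableau `P` of partition shape,
the right key `K₊(P)` is a key: each column contains the next column as a set, and
the `j`-th column has size equal to the length of the `j`-th column of `P`. -/
theorem stmt17 (T : List (List ℕ)) (hT : IsDecTab T) :
    ∀ j : ℕ, Kcol T (j + 1) ⊆ Kcol T j ∧ (Kcol T j).card = (T.getD j []).length := by
  intro j
  by_cases hj : j < T.length
  · have hdrop : T.drop j = T[j] :: T.drop (j + 1) := List.drop_eq_getElem_cons hj
    have hcw : colWord (T.drop j) = (T[j]).reverse ++ colWord (T.drop (j + 1)) := by
      rw [hdrop]; simp only [colWord, List.map_cons, List.flatten_cons]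
    have hCdec : List.Chain' (· > ·) T[j] := hT.1 _ (List.getElem_mem hj)
    have hwinc : List.Chain' (· < ·) (T[j]).reverse := chain_rev hCdec
    have hKj : Kcol T j = star (star ∅ (T[j]).reverse) (colWord (T.drop (j + 1))) := by
      rw [Kcol, hcw, star_append]
    constructor
    · rw [hKj, Kcol]
      exact star_mono _ (Finset.empty_subset _)
    · have h0 : (star ∅ (T[j]).reverse).card = (T[j]).length := by
        have := star_card_inc (T[j]).reverse ∅ hwinc (by simp)
        simpa using this
      have hsubC : ∀ x ∈ T[j], x ∈ star ∅ (T[j]).reverse := fun x hx =>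
        mem_star_of_chain hwinc ∅ x (List.mem_reverse.mpr hx)
      have hch : List.Chain' (fun C D : List ℕ => D.length ≤ C.length ∧
          ∀ r : ℕ, r < D.length → D.getD r 0 < C.getD r 0)
          (T[j] :: T.drop (j + 1)) := by
        rw [← hdrop]
        exact hT.2.suffix (List.drop_suffix j T)
      have hdec' : ∀ D ∈ T.drop (j + 1), List.Chain' (· > ·) D := fun D hD =>
        hT.1 D ((List.drop_subset _ _) hD)
      have hm := main_card (T.drop (j + 1)) T[j] (star ∅ (T[j]).reverse) hdec' hch
        (dom_of_subset hCdec hsubC)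
      rw [hKj, hm, h0, List.getD_eq_getElem _ _ hj]
  · push_neg at hj
    have h1 : T.drop j = [] := List.drop_eq_nil_of_le hj
    have h2 : T.drop (j + 1) = [] := List.drop_eq_nil_of_le (by omega)
    have h3 : T.getD j [] = [] := List.getD_eq_default _ _ hj
    refine ⟨?_, ?_⟩
    · simp [Kcol, h1, h2]
    · rw [h3, Kcol, h1]
      simp [colWord, show star (∅ : Finset ℕ) [] = ∅ from rfl]
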